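/- Trace formula for the Mazur quantity: for two data sets (X₁, Y₁, Λ₁) and (X₂, Y₂, Λ₂) with X₁ > 0 and X₂ > 0, writing Φ₁ := Φ(X₁,Y₁,Λ₁) and Φ₂ := Φ(X₂,Y₂,Λ₂), one has the equality of complex numbers trace(Φ₁ * Φ₂⁻¹) - 3 = (1/(X₁*X₂)) * ( (X₁－X₂)^2 + 2*(X₁＋X₂)*Complex.normSq(Λ₁－Λ₂) + (Complex.normSq(Λ₁－Λ₂))^2 + ( (Y₁－Y₂) + Complex.im((Λ₁－Λ₂)*conj(Λ₁＋Λ₂)) )^2 ), where the right-hand side is a real number coerced to ℂ (here Φ₂⁻¹ is the matrix inverse, which equals η * Φ₂ * η). -/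

import Mathlib

open Complex ComplexConjugate Matrix

/-- The `SU(2,1)` metric `η = diag(-1, 1, 1)`. -/
noncomputable def etaM : Matrix (Fin 3) (Fin 3) ℂ :=
  Matrix.diagonal ![-1, 1, 1]

/-- The vector `v` built from the Ernst potential `ℰ = -X - Λ conj(Λ) + i Y`
and the electromagnetic potential `Λ`:
`v = (2√X)⁻¹ (ℰ - 1, 2Λ, ℰ + 1)`. -/
noncomputable def vE (X Y : ℝ) (Λ : ℂ) : Fin 3 → ℂ :=
  let ℰ : ℂ := -(X : ℂ) - Λ * conj Λ + Complex.I * Y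
  ![(ℰ - 1) / (2 * Real.sqrt X), Λ / Real.sqrt X, (ℰ + 1) / (2 * Real.sqrt X)]

/-- The hermitian matrix `Φ` of the Mazur construction:
`Φ_{ab} = η_{ab} + 2 conj(v_a) v_b`. -/
noncomputable def PhiM (X Y : ℝ) (Λ : ℂ) : Matrix (Fin 3) (Fin 3) ℂ :=
  Matrix.of fun a b => etaM a b + 2 * conj (vE X Y Λ a) * vE X Y Λ b

/-- polynomial part: `PhiM = (2 s²)⁻¹ • mAux` with `s = √X`. -/
noncomputable def mAux (s Y : ℝ) (Λ : ℂ) : Matrix (Fin 3) (Fin 3) ℂ :=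
  let E : ℂ := -(s:ℂ)^2 - Λ * conj Λ + Complex.I * Y
  let F : ℂ := -(s:ℂ)^2 - Λ * conj Λ - Complex.I * Y
  !![-(2*(s:ℂ)^2) + (F - 1) * (E - 1), 2 * (F - 1) * Λ, (F - 1) * (E + 1);
     2 * conj Λ * (E - 1), 2*(s:ℂ)^2 + 4 * conj Λ * Λ, 2 * conj Λ * (E + 1);
     (F + 1) * (E - 1), 2 * (F + 1) * Λ, 2*(s:ℂ)^2 + (F + 1) * (E + 1)]

set_option maxHeartbeats 1000000 in
lemma PhiM_eq (X Y : ℝ) (Λ : ℂ) (hX : 0 < X) :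
    PhiM X Y Λ = (2 * (Real.sqrt X : ℂ)^2)⁻¹ • mAux (Real.sqrt X) Y Λ := by
  have hs : (0:ℝ) < Real.sqrt X := Real.sqrt_pos.2 hX
  have hs0 : (Real.sqrt X : ℂ) ≠ 0 := by exact_mod_cast hs.ne'
  have hX2 : ((X:ℝ):ℂ) = (Real.sqrt X : ℂ)^2 := by
    norm_cast; rw [Real.sq_sqrt hX.le]
  ext i j
  fin_cases i <;> fin_cases j <;>
    (simp [PhiM, etaM, vE, mAux, hX2, map_div₀, map_sub, map_add, map_neg,
      _root_.map_one, map_ofNat, Complex.conj_I, Complex.conj_ofReal,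
      Complex.conj_conj, Matrix.diagonal, Matrix.vecHead, Matrix.vecTail,
      Matrix.smul_apply, smul_eq_mul];
     ring_nf <;> (field_simp <;> first | ring1 | (left; trivial)))

lemma etaM_eq : etaM = !![-1,0,0;0,1,0;0,0,1] := by
  ext i j; fin_cases i <;> fin_cases j <;>
    simp [etaM, Matrix.diagonal, Matrix.vecHead, Matrix.vecTail]

set_option maxHeartbeats 1000000 in
lemma mAux_mul (s Y : ℝ) (Λ : ℂ) :
    mAux s Y Λ * (etaM * mAux s Y Λ * etaM) = (4 * (s:ℂ)^4) • 1 := by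
  have h2 : (Complex.I)^2 = -1 := Complex.I_sq
  have h3 : (Complex.I)^3 = -Complex.I := by rw [pow_succ, h2]; ring
  have h4 : (Complex.I)^4 = 1 := by rw [pow_succ, h3]; simp [Complex.I_mul_I]
  rw [etaM_eq, mAux]
  ext i j
  fin_cases i <;> fin_cases j <;>
    (simp [Matrix.mul_apply, Fin.sum_univ_three, Matrix.vecHead, Matrix.vecTail,
      Matrix.smul_apply, Matrix.one_apply, smul_eq_mul];
     ring_nf <;> (simp only [h2, h3, h4]; ring))

lemma PhiM_inv (X Y : ℝ) (Λ : ℂ) (hX : 0 < X) :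
    (PhiM X Y Λ)⁻¹ =
      (2 * (Real.sqrt X : ℂ)^2)⁻¹ • (etaM * mAux (Real.sqrt X) Y Λ * etaM) := by
  have hs : (0:ℝ) < Real.sqrt X := Real.sqrt_pos.2 hX
  have hs0 : (Real.sqrt X : ℂ) ≠ 0 := by exact_mod_cast hs.ne'
  apply Matrix.inv_eq_right_inv
  rw [PhiM_eq X Y Λ hX, Matrix.smul_mul, Matrix.mul_smul, smul_smul, mAux_mul,
    smul_smul]
  rw [show ((2 * (Real.sqrt X:ℂ) ^ 2)⁻¹ * (2 * (Real.sqrt X:ℂ) ^ 2)⁻¹ *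
      (4 * (Real.sqrt X:ℂ) ^ 4)) = 1 by field_simp; ring]
  exact one_smul _ _

set_option maxHeartbeats 2000000 in
/-- Trace formula for the Mazur quantity:
`tr(Φ₁ Φ₂⁻¹) - 3 = (X₁X₂)⁻¹ [ (X₁-X₂)² + 2(X₁+X₂)|Λ₁-Λ₂|² + |Λ₁-Λ₂|⁴
  + ( (Y₁-Y₂) + Im((Λ₁-Λ₂) conj(Λ₁+Λ₂)) )² ]`. -/
theorem PhiM_trace_formula (X₁ Y₁ X₂ Y₂ : ℝ) (Λ₁ Λ₂ : ℂ)
    (hX₁ : 0 < X₁) (hX₂ : 0 < X₂) :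
    (PhiM X₁ Y₁ Λ₁ * (PhiM X₂ Y₂ Λ₂)⁻¹).trace - 3 =
      (((1 / (X₁ * X₂)) *
        ((X₁ - X₂) ^ 2 + 2 * (X₁ + X₂) * Complex.normSq (Λ₁ - Λ₂)
          + (Complex.normSq (Λ₁ - Λ₂)) ^ 2
          + ((Y₁ - Y₂) + ((Λ₁ - Λ₂) * conj (Λ₁ + Λ₂)).im) ^ 2) : ℝ) : ℂ) := by
  have hs₁ : (0:ℝ) < Real.sqrt X₁ := Real.sqrt_pos.2 hX₁
  have hs₂ : (0:ℝ) < Real.sqrt X₂ := Real.sqrt_pos.2 hX₂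
  have hs₁0 : (Real.sqrt X₁ : ℂ) ≠ 0 := by exact_mod_cast hs₁.ne'
  have hs₂0 : (Real.sqrt X₂ : ℂ) ≠ 0 := by exact_mod_cast hs₂.ne'
  have h2 : (Complex.I)^2 = -1 := Complex.I_sq
  have h3 : (Complex.I)^3 = -Complex.I := by rw [pow_succ, h2]; ring
  have h4 : (Complex.I)^4 = 1 := by rw [pow_succ, h3]; simp [Complex.I_mul_I]
  have hc1 : ((X₁:ℝ):ℂ) = (Real.sqrt X₁ : ℂ)^2 := by
    norm_cast; rw [Real.sq_sqrt hX₁.le]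
  have hc2 : ((X₂:ℝ):ℂ) = (Real.sqrt X₂ : ℂ)^2 := by
    norm_cast; rw [Real.sq_sqrt hX₂.le]
  have hns : ∀ z : ℂ, ((Complex.normSq z : ℝ) : ℂ) = z * conj z :=
    fun z => (Complex.mul_conj z).symm
  have him : ∀ z : ℂ, ((z.im : ℝ) : ℂ) = (z - conj z) / (2 * Complex.I) := by
    intro z
    rw [Complex.sub_conj]
    field_simp
    push_cast
    ring
  rw [PhiM_eq X₁ Y₁ Λ₁ hX₁, PhiM_inv X₂ Y₂ Λ₂ hX₂]
  rw [Matrix.smul_mul, Matrix.mul_smul, smul_smul, Matrix.trace_smul, smul_eq_mul]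
  rw [etaM_eq, Matrix.trace_fin_three]
  push_cast
  rw [hns, him, hc1, hc2]
  simp only [mAux, Matrix.mul_apply, Fin.sum_univ_three, Matrix.cons_val', Matrix.cons_val_zero,
    Matrix.cons_val_one, Matrix.head_cons, Matrix.head_fin_const, Matrix.empty_val',
    Matrix.cons_val_fin_one, Matrix.cons_val_two, Matrix.tail_cons, Matrix.vecHead,
    Matrix.vecTail, Matrix.of_apply, map_sub, map_add, Function.comp_apply, Matrix.cons_val_succ, map_mul, Complex.conj_conj]
  field_simp
  ring_nf <;> (simp only [h2, h3, h4]; try ring)
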